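/- Let K and K' be complex Hilbert spaces with K nontrivial, let Q₀ be a positive contraction on K, and let D : K' → K be a unitary operator. Define the bounded operator W on K × K' by W(x, y) = ( 2Q₀x + Q₀^{1/2}(I − Q₀)^{1/2} D y , D*( Q₀^{1/2}(I − Q₀)^{1/2} x ) ). Then 0 ∈ σ(W) if and only if 0 ∈ σ(Q₀) or 1 ∈ σ(Q₀). -/

import Mathlib

set_option synthInstance.maxHeartbeats 400000
set_option maxHeartbeats 1000000

open ContinuousLinearMap in
/-- For a positive contraction `Q₀` on a nontrivial `K`, a unitary `D : K' → K`, and the block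
operator `W(x, y) = (2Q₀x + Q₀^{1/2}(I - Q₀)^{1/2}Dy, D*(Q₀^{1/2}(I - Q₀)^{1/2}x))` on `K × K'`,
`0 ∈ σ(W)` iff `0 ∈ σ(Q₀)` or `1 ∈ σ(Q₀)`. -/
theorem zero_mem_spectrum_blockW_iff
    {K K' : Type*} [NormedAddCommGroup K] [InnerProductSpace ℂ K] [CompleteSpace K]
    [Nontrivial K]
    [NormedAddCommGroup K'] [InnerProductSpace ℂ K'] [CompleteSpace K']
    (Q₀ : K →L[ℂ] K) (hsa : IsSelfAdjoint Q₀) (hpos : 0 ≤ Q₀) (hc : ‖Q₀‖ ≤ 1)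
    (D : K' →L[ℂ] K) (hD1 : adjoint D ∘L D = ContinuousLinearMap.id ℂ K')
    (hD2 : D ∘L adjoint D = ContinuousLinearMap.id ℂ K)
    (W : WithLp 2 (K × K') →L[ℂ] WithLp 2 (K × K'))
    (hW : ∀ (x : K) (y : K'),
      W ((WithLp.equiv 2 (K × K')).symm (x, y)) =
        (WithLp.equiv 2 (K × K')).symm
          ((2 : ℂ) • Q₀ x + (CFC.sqrt Q₀) ((CFC.sqrt (1 - Q₀)) (D y)),
           adjoint D ((CFC.sqrt Q₀) ((CFC.sqrt (1 - Q₀)) x)))) :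
    (0 : ℂ) ∈ spectrum ℂ W ↔ (0 : ℂ) ∈ spectrum ℂ Q₀ ∨ (1 : ℂ) ∈ spectrum ℂ Q₀ := by
  have hQ1 : Q₀ ≤ 1 := (CStarAlgebra.norm_le_one_iff_of_nonneg Q₀ hpos).mp hc
  have h1Q : (0 : K →L[ℂ] K) ≤ 1 - Q₀ := sub_nonneg.mpr hQ1
  set A : K →L[ℂ] K := CFC.sqrt Q₀ with hA
  set B : K →L[ℂ] K := CFC.sqrt (1 - Q₀) with hB
  have hAA : A * A = Q₀ := CFC.sqrt_mul_sqrt_self Q₀ hpos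
  have hBB : B * B = 1 - Q₀ := CFC.sqrt_mul_sqrt_self _ h1Q
  -- `A` and `B` commute, being continuous functions of `Q₀`
  have hcomm : Commute A B := by
    have hA' : A = cfc (fun x : ℝ => (NNReal.sqrt x.toNNReal : ℝ)) Q₀ := by
      rw [hA, CFC.sqrt_eq_cfc, cfc_nnreal_eq_real NNReal.sqrt Q₀ hpos]
    have hsub : (1 - Q₀ : K →L[ℂ] K) = cfc (fun x : ℝ => 1 - x) Q₀ := by
      rw [cfc_sub (fun _ : ℝ => (1 : ℝ)) (fun x : ℝ => x) Q₀, cfc_const (1 : ℝ) Q₀,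
        cfc_id' ℝ Q₀, map_one]
    have hgc : Continuous (fun x : ℝ => (NNReal.sqrt x.toNNReal : ℝ)) :=
      NNReal.continuous_coe.comp (NNReal.continuous_sqrt.comp continuous_real_toNNReal)
    have hfc : Continuous (fun x : ℝ => 1 - x) := by fun_prop
    have hB' : B = cfc ((fun x : ℝ => (NNReal.sqrt x.toNNReal : ℝ)) ∘ (fun x : ℝ => 1 - x)) Q₀ := by
      rw [hB, CFC.sqrt_eq_cfc, cfc_nnreal_eq_real NNReal.sqrt (1 - Q₀) h1Q, hsub,
        ← cfc_comp (fun x : ℝ => (NNReal.sqrt x.toNNReal : ℝ)) (fun x : ℝ => 1 - x) Q₀ hsa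
          hgc.continuousOn hfc.continuousOn]
    rw [hA', hB']
    exact cfc_commute_cfc _ _ _
  set S : K →L[ℂ] K := A * B with hS
  have hSS : S * S = Q₀ * (1 - Q₀) := by
    rw [hS, mul_assoc, ← mul_assoc B A B, ← hcomm.eq, mul_assoc, ← mul_assoc, hAA, hBB]
  -- pointwise facts about the unitary `D`
  have hD'D : ∀ y, adjoint D (D y) = y := fun y => by
    simpa using DFunLike.congr_fun hD1 y
  have hDD' : ∀ x, D (adjoint D x) = x := fun x => by
    simpa using DFunLike.congr_fun hD2 x
  -- the product continuous linear equivalence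
  set e : WithLp 2 (K × K') ≃L[ℂ] (K × K') := WithLp.prodContinuousLinearEquiv 2 ℂ K K' with he
  have hWe : ∀ (x : K) (y : K'),
      W (e.symm (x, y)) = e.symm ((2 : ℂ) • Q₀ x + S (D y), adjoint D (S x)) := by
    intro x y
    simpa [he, hS, ContinuousLinearMap.mul_apply] using hW x y
  -- the key equivalence
  have key : IsUnit W ↔ IsUnit S := by
    constructor
    · intro h
      set V : WithLp 2 (K × K') →L[ℂ] WithLp 2 (K × K') := ↑h.unit⁻¹ with hV
      have hVW : ∀ z, V (W z) = z := fun z => by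
        have h1 : V * W = 1 := h.val_inv_mul
        calc V (W z) = (V * W) z := rfl
        _ = z := by rw [h1]; rfl
      have hWV : ∀ z, W (V z) = z := fun z => by
        have h1 : W * V = 1 := h.mul_val_inv
        calc W (V z) = (W * V) z := rfl
        _ = z := by rw [h1]; rfl
      set L0 : K →L[ℂ] K' :=
        snd ℂ K K' ∘L (e : WithLp 2 (K × K') →L[ℂ] K × K') ∘L V ∘L
          (e.symm : K × K' →L[ℂ] WithLp 2 (K × K')) ∘L inl ℂ K K' with hL0
      set Rr : K →L[ℂ] K :=
        fst ℂ K K' ∘L (e : WithLp 2 (K × K') →L[ℂ] K × K') ∘L V ∘L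
          (e.symm : K × K' →L[ℂ] WithLp 2 (K × K')) ∘L inr ℂ K K' ∘L adjoint D with hRr
      have hleft : ∀ w, D (L0 (S w)) = w := by
        intro w
        have h2 : W (e.symm (0, adjoint D w)) = e.symm (S w, 0) := by
          rw [hWe]
          simp [hDD']
        have h3 : V (e.symm (S w, 0)) = e.symm (0, adjoint D w) := by
          rw [← h2, hVW]
        have h4 : L0 (S w) = adjoint D w := by
          have h4' : L0 (S w) = (e (V (e.symm (S w, 0)))).2 := by simp [hL0]
          rw [h4', h3]
          simp
        rw [h4, hDD']
      have hright : ∀ w, S (Rr w) = w := by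
        intro w
        have h2 : W (V (e.symm (0, adjoint D w))) = e.symm (0, adjoint D w) := hWV _
        have hp : V (e.symm (0, adjoint D w)) = e.symm (e (V (e.symm (0, adjoint D w)))) := by
          simp
        rw [hp, hWe] at h2
        have h3 := e.symm.injective h2
        have h4 : adjoint D (S (e (V (e.symm (0, adjoint D w)))).1) = adjoint D w :=
          congrArg Prod.snd h3
        have h5 : S (e (V (e.symm (0, adjoint D w)))).1 = w := by
          have := congrArg D h4
          rwa [hDD', hDD'] at this
        have h6 : Rr w = (e (V (e.symm (0, adjoint D w)))).1 := by
          simp [hRr]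
        rw [h6, h5]
      have hSR : S * Rr = 1 := by
        ext w
        simpa [mul_apply] using hright w
      have hLS : (D ∘L L0) * S = 1 := by
        ext w
        simpa [mul_apply] using hleft w
      have heq : D ∘L L0 = Rr := left_inv_eq_right_inv hLS hSR
      exact ⟨⟨S, Rr, hSR, by rw [← heq]; exact hLS⟩, rfl⟩
    · intro hs
      set T : K →L[ℂ] K := ↑hs.unit⁻¹ with hT
      have hST : ∀ w, S (T w) = w := fun w => by
        have h1 : S * T = 1 := hs.mul_val_inv
        calc S (T w) = (S * T) w := rfl
        _ = w := by rw [h1]; rfl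
      have hTS : ∀ w, T (S w) = w := fun w => by
        have h1 : T * S = 1 := hs.val_inv_mul
        calc T (S w) = (T * S) w := rfl
        _ = w := by rw [h1]; rfl
      set V' : (K × K') →L[ℂ] (K × K') :=
        (T ∘L D ∘L snd ℂ K K').prod
          ((adjoint D ∘L T ∘L fst ℂ K K') -
            (2 : ℂ) • (adjoint D ∘L T ∘L Q₀ ∘L T ∘L D ∘L snd ℂ K K')) with hV'
      set V : WithLp 2 (K × K') →L[ℂ] WithLp 2 (K × K') :=
        (e.symm : K × K' →L[ℂ] WithLp 2 (K × K')) ∘L V' ∘L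
          (e : WithLp 2 (K × K') →L[ℂ] K × K') with hV
      have hV'app : ∀ (u : K) (v : K'),
          V' (u, v) = (T (D v),
            adjoint D (T u) - (2 : ℂ) • adjoint D (T (Q₀ (T (D v))))) := by
        intro u v
        simp [hV']
      have hVapp : ∀ (u : K) (v : K'), V (e.symm (u, v)) = e.symm (V' (u, v)) := by
        intro u v
        simp [hV]
      have hWVmul : W * V = 1 := by
        ext z
        have hz : z = e.symm ((e z).1, (e z).2) := by simp
        set u := (e z).1
        set v := (e z).2
        calc (W * V) z = W (V (e.symm (u, v))) := by rw [ContinuousLinearMap.mul_apply, ← hz]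
        _ = W (e.symm (V' (u, v))) := by rw [hVapp]
        _ = e.symm (u, v) := by
            rw [hV'app, hWe]
            congr 1
            refine Prod.ext ?_ ?_
            · show (2 : ℂ) • Q₀ (T (D v)) +
                S (D (adjoint D (T u) - (2 : ℂ) • adjoint D (T (Q₀ (T (D v)))))) = u
              rw [map_sub, map_smul, hDD', hDD', map_sub, map_smul, hST, hST]
              abel
            · show adjoint D (S (T (D v))) = v
              rw [hST, hD'D]
        _ = z := hz.symm
      have hVWmul : V * W = 1 := by
        ext z
        have hz : z = e.symm ((e z).1, (e z).2) := by simp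
        set x := (e z).1
        set y := (e z).2
        calc (V * W) z = V (W (e.symm (x, y))) := by rw [ContinuousLinearMap.mul_apply, ← hz]
        _ = V (e.symm ((2 : ℂ) • Q₀ x + S (D y), adjoint D (S x))) := by rw [hWe]
        _ = e.symm (V' ((2 : ℂ) • Q₀ x + S (D y), adjoint D (S x))) := by rw [hVapp]
        _ = e.symm (x, y) := by
            rw [hV'app]
            congr 1
            refine Prod.ext ?_ ?_
            · show T (D (adjoint D (S x))) = x
              rw [hDD', hTS]
            · show adjoint D (T ((2 : ℂ) • Q₀ x + S (D y))) -
                (2 : ℂ) • adjoint D (T (Q₀ (T (D (adjoint D (S x)))))) = y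
              rw [hDD', hTS, map_add, map_smul, map_add, map_smul, hTS, hD'D]
              abel
        _ = z := hz.symm
      exact ⟨⟨W, V, hWVmul, hVWmul⟩, rfl⟩
  -- assemble the spectral statement
  rw [spectrum.zero_mem_iff, spectrum.zero_mem_iff, spectrum.mem_iff, map_one, key, ← not_and_or]
  apply not_congr
  have hQcomm : Commute Q₀ (1 - Q₀) := (Commute.one_right Q₀).sub_right (Commute.refl Q₀)
  rw [← isUnit_mul_self_iff, hSS, hQcomm.isUnit_mul_iff]
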